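/- Let p, q ∈ ℕ. Then the function u(z) = −(1/(q+1)) Σ_{k=1}^{q+1} (−1)^k binom(q+1, k) z̄^k H_{p, q+1−k}(z, z̄) solves the ∂̄-problem ∂̄u(z) = H_{p,q}(z, z̄) for all z ∈ ℂ. -/

import Mathlib

/-- The Wirtinger (Cauchy–Riemann) operator `∂̄u(z) = (1/2)(∂u/∂x + i ∂u/∂y)`. -/
noncomputable def dbar (u : ℂ → ℂ) (z : ℂ) : ℂ :=
  (1 / 2) * (fderiv ℝ u z 1 + Complex.I * fderiv ℝ u z Complex.I)

/-- The Itô complex Hermite polynomials. -/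
noncomputable def hermiteC (m n : ℕ) (z : ℂ) : ℂ :=
  ∑ k ∈ Finset.range (min m n + 1),
    (-1) ^ k * (k.factorial : ℂ) * (m.choose k) * (n.choose k) *
      z ^ (m - k) * (starRingEnd ℂ) z ^ (n - k)

section aux

open Complex

lemma diff_conj' : Differentiable ℝ (fun w : ℂ => (starRingEnd ℂ) w) :=
  fun z => (Complex.conjCLE.toContinuousLinearMap.hasFDerivAt (x := z)).differentiableAt

lemma diff_mono (a b : ℕ) : Differentiable ℝ (fun w : ℂ => w ^ a * (starRingEnd ℂ) w ^ b) :=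
  ((differentiable_pow (𝕜 := ℂ) a).restrictScalars ℝ).mul (diff_conj'.pow b)

lemma dbar_monomial (a b : ℕ) (z : ℂ) :
    dbar (fun w : ℂ => w ^ a * (starRingEnd ℂ) w ^ b) z
      = b * z ^ a * (starRingEnd ℂ) z ^ (b - 1) := by
  have h1 : HasFDerivAt (fun w : ℂ => w ^ a)
      ((ContinuousLinearMap.smulRight (1 : ℂ →L[ℂ] ℂ) ((a : ℂ) * z ^ (a - 1))).restrictScalars ℝ) z :=
    ((hasDerivAt_pow a z).hasFDerivAt).restrictScalars ℝ
  have hc : HasFDerivAt (fun w : ℂ => (starRingEnd ℂ) w)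
      (Complex.conjCLE.toContinuousLinearMap) z :=
    Complex.conjCLE.toContinuousLinearMap.hasFDerivAt
  have h2 : HasFDerivAt (fun w : ℂ => (starRingEnd ℂ) w ^ b)
      (((ContinuousLinearMap.smulRight (1 : ℂ →L[ℂ] ℂ)
          ((b : ℂ) * (starRingEnd ℂ) z ^ (b - 1))).restrictScalars ℝ).comp
        Complex.conjCLE.toContinuousLinearMap) z :=
    (((hasDerivAt_pow b ((starRingEnd ℂ) z)).hasFDerivAt).restrictScalars ℝ).comp z hc
  have h := h1.fun_mul h2
  rw [dbar, h.fderiv]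
  simp only [ContinuousLinearMap.add_apply, ContinuousLinearMap.smul_apply,
    ContinuousLinearMap.coe_restrictScalars', ContinuousLinearMap.smulRight_apply,
    ContinuousLinearMap.one_apply, ContinuousLinearEquiv.coe_coe, Complex.conjCLE_apply,
    smul_eq_mul, map_one, Complex.conj_I, ContinuousLinearMap.coe_comp', Function.comp_apply]
  ring_nf
  simp [Complex.I_sq]
  ring

lemma dbar_const_mul (c : ℂ) (f : ℂ → ℂ) (z : ℂ) (hf : DifferentiableAt ℝ f z) :
    dbar (fun w => c * f w) z = c * dbar f z := by
  rw [dbar, dbar, fderiv_const_mul hf]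
  simp only [ContinuousLinearMap.smul_apply, smul_eq_mul]
  ring

lemma dbar_sum {ι : Type*} (s : Finset ι) (f : ι → ℂ → ℂ) (z : ℂ)
    (hf : ∀ i ∈ s, DifferentiableAt ℝ (f i) z) :
    dbar (fun w => ∑ i ∈ s, f i w) z = ∑ i ∈ s, dbar (f i) z := by
  rw [dbar, fderiv_fun_sum hf]
  simp only [ContinuousLinearMap.sum_apply, dbar, Finset.mul_sum, ← Finset.sum_add_distrib]

lemma dbar_mul (f g : ℂ → ℂ) (z : ℂ) (hf : DifferentiableAt ℝ f z)
    (hg : DifferentiableAt ℝ g z) :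
    dbar (fun w => f w * g w) z = dbar f z * g z + f z * dbar g z := by
  rw [dbar, fderiv_fun_mul hf hg]
  simp only [ContinuousLinearMap.add_apply, ContinuousLinearMap.smul_apply, smul_eq_mul]
  rw [dbar, dbar]
  ring

lemma dbar_cmono (c : ℂ) (a b : ℕ) (z : ℂ) :
    dbar (fun w : ℂ => c * w ^ a * (starRingEnd ℂ) w ^ b) z
      = c * b * z ^ a * (starRingEnd ℂ) z ^ (b - 1) := by
  have : (fun w : ℂ => c * w ^ a * (starRingEnd ℂ) w ^ b)
      = fun w : ℂ => c * (w ^ a * (starRingEnd ℂ) w ^ b) := by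
    funext w; ring
  rw [this, dbar_const_mul c _ z ((diff_mono a b) z), dbar_monomial]
  ring

lemma diff_hermite (m n : ℕ) : Differentiable ℝ (fun w => hermiteC m n w) := by
  unfold hermiteC
  apply Differentiable.fun_sum
  intro k _
  exact (((((differentiable_const _).mul (differentiable_const _)).mul
    (differentiable_const _)).mul (differentiable_const _)).mul
      ((differentiable_pow (𝕜 := ℂ) _).restrictScalars ℝ)).mul (diff_conj'.pow _)

lemma dbar_hermite (m n : ℕ) (z : ℂ) :
    dbar (fun w => hermiteC m n w) z = n * hermiteC m (n - 1) z := by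
  unfold hermiteC
  rw [dbar_sum]
  · have hterm : ∀ k, dbar (fun w : ℂ =>
        (-1) ^ k * (k.factorial : ℂ) * (m.choose k) * (n.choose k) *
          w ^ (m - k) * (starRingEnd ℂ) w ^ (n - k)) z
        = ((-1) ^ k * (k.factorial : ℂ) * (m.choose k) * (n.choose k)) * (n - k : ℕ) *
            z ^ (m - k) * (starRingEnd ℂ) z ^ (n - k - 1) := by
      intro k
      exact dbar_cmono _ _ _ z
    rw [Finset.sum_congr rfl (fun k _ => hterm k)]
    cases n with
    | zero => simp
    | succ n' =>
      rw [Finset.mul_sum]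
      rw [show (n' + 1 - 1) = n' from rfl]
      have hsub : Finset.range (min m n' + 1) ⊆ Finset.range (min m (n' + 1) + 1) :=
        Finset.range_subset_range.mpr (by omega)
      have hz : ∀ k ∈ Finset.range (min m (n' + 1) + 1), k ∉ Finset.range (min m n' + 1) →
          (((n' + 1 : ℕ)) : ℂ) * ((-1) ^ k * (k.factorial : ℂ) * (m.choose k) *
            (n'.choose k) * z ^ (m - k) * (starRingEnd ℂ) z ^ (n' - k)) = 0 := by
        intro k hk hk'
        simp only [Finset.mem_range] at hk hk'
        have hkn : n' < k := by omega
        rw [Nat.choose_eq_zero_of_lt hkn]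
        simp
      rw [Finset.sum_subset hsub hz]
      apply Finset.sum_congr rfl
      intro k hk
      have h1 : (n' + 1 - k) * ((n'+1).choose k) = (n' + 1) * (n'.choose k) := by
        rw [mul_comm, ← Nat.choose_mul_succ_eq]
        ring
      have h2 : n' + 1 - k - 1 = n' - k := by omega
      rw [h2]
      have hc : ((n' + 1 - k : ℕ) : ℂ) * (((n'+1).choose k : ℕ) : ℂ)
          = (((n' + 1 : ℕ)) : ℂ) * ((n'.choose k : ℕ) : ℂ) := by exact_mod_cast h1
      linear_combination ((-1 : ℂ)) ^ k * (k.factorial : ℂ) * (m.choose k : ℂ) *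
        z ^ (m - k) * (starRingEnd ℂ) z ^ (n' - k) * hc
  · intro k _
    exact ((((((differentiable_const _).mul (differentiable_const _)).mul
      (differentiable_const _)).mul (differentiable_const _)).mul
        ((differentiable_pow (𝕜 := ℂ) _).restrictScalars ℝ)).mul (diff_conj'.pow _)) z

end aux

theorem stmt_14 (p q : ℕ) :
    ∀ z : ℂ,
      dbar (fun w => -(1 / ((q : ℂ) + 1)) * ∑ k ∈ Finset.Icc 1 (q + 1),
        (-1) ^ k * ((q + 1).choose k : ℂ) * (starRingEnd ℂ) w ^ k *
          hermiteC p (q + 1 - k) w) z = hermiteC p q z := by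
  intro z
  have hq1 : ((q : ℂ) + 1) ≠ 0 := Nat.cast_add_one_ne_zero q
  have hd : ∀ k ∈ Finset.Icc 1 (q + 1), DifferentiableAt ℝ
      (fun w : ℂ => (-1 : ℂ) ^ k * ((q + 1).choose k : ℂ) * (starRingEnd ℂ) w ^ k *
        hermiteC p (q + 1 - k) w) z := by
    intro k _
    exact ((((differentiable_const _).mul (differentiable_const _)).mul
      (diff_conj'.pow k)).mul (diff_hermite p (q + 1 - k))) z
  rw [dbar_const_mul _ _ z (DifferentiableAt.fun_sum hd), dbar_sum _ _ z hd]
  have hterm : ∀ k, dbar (fun w : ℂ => (-1 : ℂ) ^ k * ((q + 1).choose k : ℂ) *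
        (starRingEnd ℂ) w ^ k * hermiteC p (q + 1 - k) w) z
      = (-1 : ℂ) ^ k * ((q + 1).choose k : ℂ) *
          ((k : ℂ) * (starRingEnd ℂ) z ^ (k - 1) * hermiteC p (q + 1 - k) z
            + ((q + 1 - k : ℕ) : ℂ) * (starRingEnd ℂ) z ^ k * hermiteC p (q + 1 - k - 1) z) := by
    intro k
    rw [dbar_mul (fun w : ℂ => (-1 : ℂ) ^ k * ((q + 1).choose k : ℂ) * (starRingEnd ℂ) w ^ k)
      (fun w : ℂ => hermiteC p (q + 1 - k) w) z
      (((((differentiable_const _).mul (differentiable_const _)).mul (diff_conj'.pow k))) z)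
      (diff_hermite p (q + 1 - k) z)]
    have e : (fun w : ℂ => (-1 : ℂ) ^ k * ((q + 1).choose k : ℂ) * (starRingEnd ℂ) w ^ k)
        = fun w : ℂ => ((-1 : ℂ) ^ k * ((q + 1).choose k : ℂ)) * w ^ 0 *
            (starRingEnd ℂ) w ^ k := by
      funext w; ring
    rw [e, dbar_cmono, dbar_hermite]
    ring
  rw [Finset.sum_congr rfl (fun k _ => hterm k)]
  rw [← Finset.Ico_add_one_right_eq_Icc, Finset.sum_Ico_eq_sum_range]
  have hrange : q + 1 + 1 - 1 = q + 1 := rfl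
  rw [hrange]
  have key : ∀ i ∈ Finset.range (q + 1),
      (-1 : ℂ) ^ (1 + i) * ((q + 1).choose (1 + i) : ℂ) *
          (((1 + i : ℕ) : ℂ) * (starRingEnd ℂ) z ^ (1 + i - 1) * hermiteC p (q + 1 - (1 + i)) z
            + ((q + 1 - (1 + i) : ℕ) : ℂ) * (starRingEnd ℂ) z ^ (1 + i) *
                hermiteC p (q + 1 - (1 + i) - 1) z)
      = ((q : ℂ) + 1) *
          ((-1 : ℂ) ^ (i + 1) * (q.choose (i + 1) : ℂ) * (starRingEnd ℂ) z ^ (i + 1) *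
              hermiteC p (q - (i + 1)) z
            - (-1 : ℂ) ^ i * (q.choose i : ℂ) * (starRingEnd ℂ) z ^ i *
                hermiteC p (q - i) z) := by
    intro i _
    have e3 : q + 1 - (1 + i) - 1 = q - (i + 1) := by omega
    have e1 : q + 1 - (1 + i) = q - i := by omega
    have e2 : 1 + i - 1 = i := by omega
    rw [e3, e1, e2]
    have c1 : (1 + i) * ((q + 1).choose (1 + i)) = (q + 1) * (q.choose i) := by
      rw [add_comm 1 i]
      simpa [Nat.succ_eq_add_one, mul_comm] using (Nat.add_one_mul_choose_eq q i).symm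
    have c2 : (q - i) * ((q + 1).choose (1 + i)) = (q + 1) * (q.choose (i + 1)) := by
      have h := Nat.choose_mul_succ_eq q (i + 1)
      rw [show q + 1 - (i + 1) = q - i from by omega] at h
      rw [add_comm 1 i]
      calc (q - i) * ((q + 1).choose (i + 1)) = (q + 1).choose (i + 1) * (q - i) := by ring
        _ = q.choose (i + 1) * (q + 1) := h.symm
        _ = (q + 1) * (q.choose (i + 1)) := by ring
    have c1' : ((1 + i : ℕ) : ℂ) * (((q + 1).choose (1 + i) : ℕ) : ℂ)
        = ((q : ℂ) + 1) * ((q.choose i : ℕ) : ℂ) := by exact_mod_cast c1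
    have c2' : ((q - i : ℕ) : ℂ) * (((q + 1).choose (1 + i) : ℕ) : ℂ)
        = ((q : ℂ) + 1) * ((q.choose (i + 1) : ℕ) : ℂ) := by exact_mod_cast c2
    linear_combination ((-1 : ℂ)) ^ (i + 1) * (starRingEnd ℂ) z ^ i * hermiteC p (q - i) z * c1'
      + (-1 : ℂ) ^ (i + 1) * (starRingEnd ℂ) z ^ (i + 1) * hermiteC p (q - (i + 1)) z * c2'
  rw [Finset.sum_congr rfl key, ← Finset.mul_sum,
    Finset.sum_range_sub (fun i => (-1 : ℂ) ^ i * (q.choose i : ℂ) *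
      (starRingEnd ℂ) z ^ i * hermiteC p (q - i) z) (q + 1)]
  have hT1 : (q.choose (q + 1) : ℂ) = 0 := by
    rw [Nat.choose_eq_zero_of_lt (by omega)]; norm_num
  rw [hT1]
  simp only [pow_zero, Nat.choose_zero_right, Nat.cast_one, Nat.sub_zero, one_mul, mul_zero,
    zero_mul, mul_one, zero_sub]
  field_simp
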